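/- For a weak almost contact metric structure (φ,Q,ξ,η,g) on a finite-dimensional real vector space V, the endomorphism φ is skew-adjoint and Q is self-adjoint with respect to g: g(φX,Y) = -g(X,φY) and g(Q X,Y) = g(X,Q Y) for all X,Y ∈ V. -/

import Mathlib

open scoped RealInnerProductSpace

noncomputable section

theorem weak_almost_contact_metric_skew_selfadjoint
    {V : Type*} [NormedAddCommGroup V] [InnerProductSpace ℝ V] [FiniteDimensional ℝ V]
    (φ Q : V →ₗ[ℝ] V) (hQ : Function.Bijective Q)
    (ξ : V) (η : V →ₗ[ℝ] ℝ) (ν : ℝ) (hν : 0 < ν)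
    (hφφ : ∀ X, φ (φ X) = -(Q X) + η X • Q ξ)
    (hηξ : η ξ = 1)
    (hQξ : Q ξ = ν • ξ)
    (hD : ∀ X, η X = 0 → η (φ X) = 0)
    (hcompat : ∀ X Y, ⟪φ X, φ Y⟫ = ⟪X, Q Y⟫ - η X * η (Q Y))
    :
    (∀ X Y, ⟪φ X, Y⟫ = -⟪X, φ Y⟫) ∧ (∀ X Y, ⟪Q X, Y⟫ = ⟪X, Q Y⟫) := by
  have hξ0 : ξ ≠ 0 := by
    intro h
    rw [h, map_zero] at hηξ
    norm_num at hηξ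
  -- φ ξ = 0
  have hφφξ : φ (φ ξ) = 0 := by
    rw [hφφ, hηξ, one_smul]; abel
  have hφξ : φ ξ = 0 := by
    have h1 := hφφ (φ ξ)
    rw [hφφξ, map_zero] at h1
    have h2 : Q (φ ξ) = Q (η (φ ξ) • ξ) := by
      rw [map_smul]
      have := h1.symm
      rw [neg_add_eq_zero] at this
      exact this
    have h3 : φ ξ = η (φ ξ) • ξ := hQ.injective h2
    have h4 : (η (φ ξ) * η (φ ξ)) • ξ = 0 := by
      calc (η (φ ξ) * η (φ ξ)) • ξ = η (φ ξ) • (η (φ ξ) • ξ) := by rw [smul_smul]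
        _ = η (φ ξ) • φ ξ := by rw [← h3]
        _ = φ (η (φ ξ) • ξ) := (map_smul φ _ _).symm
        _ = φ (φ ξ) := by rw [← h3]
        _ = 0 := hφφξ
    rcases smul_eq_zero.mp h4 with hc | hc
    · have hc0 : η (φ ξ) = 0 := by
        nlinarith [sq_nonneg (η (φ ξ))]
      rw [h3, hc0, zero_smul]
    · exact absurd hc hξ0
  -- η (φ X) = 0
  have hηφ : ∀ X, η (φ X) = 0 := by
    intro X
    have h0 : η (X - η X • ξ) = 0 := by
      simp [map_sub, map_smul, hηξ]
    have h1 := hD _ h0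
    rwa [map_sub, map_smul, hφξ, smul_zero, sub_zero] at h1
  -- η (Q X) = ν * η X
  have hηQξ : η (Q ξ) = ν := by rw [hQξ, map_smul, hηξ, smul_eq_mul, mul_one]
  have hηQ : ∀ X, η (Q X) = ν * η X := by
    intro X
    have := congrArg η (hφφ X)
    rw [hηφ, map_add, map_neg, map_smul, hηQξ, smul_eq_mul] at this
    linarith
  -- η X = ⟪X, ξ⟫
  have hηg : ∀ X : V, η X = ⟪X, ξ⟫ := by
    intro X
    have := hcompat X ξ
    rw [hφξ, inner_zero_right, hQξ, real_inner_smul_right, map_smul, hηξ,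
      smul_eq_mul, mul_one] at this
    have h2 : ν * inner ℝ X ξ = ν * η X := by linarith
    exact (mul_left_cancel₀ (ne_of_gt hν) h2).symm
  -- Q self-adjoint
  have hQsym : ∀ X Y : V, ⟪Q X, Y⟫ = ⟪X, Q Y⟫ := by
    intro X Y
    have h1 := hcompat X Y
    have h2 := hcompat Y X
    rw [real_inner_comm (φ X) (φ Y)] at h2
    rw [hηQ] at h1 h2
    rw [real_inner_comm Y (Q X)]
    linarith
  -- φ Q = Q φ
  have hφQ : ∀ X, φ (Q X) = Q (φ X) := by
    intro X
    have a := hφφ (φ X)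
    rw [hηφ, zero_smul, add_zero] at a
    have b := congrArg φ (hφφ X)
    rw [map_add, map_neg, map_smul, hQξ, map_smul, hφξ, smul_zero, smul_zero,
      add_zero, a] at b
    have := neg_injective b
    exact this.symm
  refine ⟨?_, hQsym⟩
  intro X Y
  have key : ∀ Z : V, ⟪φ X, Q Z⟫ = -⟪X, φ (Q Z)⟫ := by
    intro Z
    have h1 := hcompat (φ X) Z
    rw [hηφ, zero_mul, sub_zero, hφφ] at h1
    rw [inner_add_left, inner_neg_left, real_inner_smul_left, hQξ,
      real_inner_smul_left] at h1
    have hξφZ : ⟪ξ, φ Z⟫ = 0 := by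
      rw [real_inner_comm, ← hηg, hηφ]
    rw [hξφZ] at h1
    simp only [mul_zero, add_zero] at h1
    have e1 : (inner ℝ X (φ (Q Z)) : ℝ) = inner ℝ X (Q (φ Z)) := by rw [hφQ]
    have e2 : (inner ℝ X (Q (φ Z)) : ℝ) = inner ℝ (Q X) (φ Z) := (hQsym X (φ Z)).symm
    linarith
  obtain ⟨Z, rfl⟩ := hQ.surjective Y
  exact key Z
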